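/- (Determinantal characterization of degeneracy of a restricted bilinear form.) Let n ≥ 3 and m ∈ {2,…,n−1} be integers, let (e₁,…,e_n) be a basis of ℝⁿ, and let B : ℝⁿ × ℝⁿ → ℝ be a symmetric bilinear form which is diagonal in this basis, i.e., B(e_i,e_j) = 0 for i ≠ j and B(e_i,e_i) = α_i with α_i ≠ 0 for every i. Let I = {i₁ < ⋯ < i_m} ⊆ {1,…,n} with complement J, set E_J := span{e_j : j ∈ J}, fix (w₁,…,w_m) ∈ E_J^m, and set V := span(e_{i₁}+w₁,…,e_{i_m}+w_m). Let M be the m×m matrix with entries M_{ℓℓ'} := B(w_ℓ, w_{ℓ'})/α_{i_ℓ}. Then the restriction of B to V is degenerate — i.e., there exists v ∈ V with v ≠ 0 and B(v,x) = 0 for all x ∈ V — if and only if det(M + 𝟙_m) = 0, where 𝟙_m denotes the m×m identity matrix. -/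

import Mathlib

/-!  Determinantal characterization of degeneracy of a restricted bilinear form. -/

theorem statement9 (n m : ℕ) (hn : 3 ≤ n) (hm : 2 ≤ m ∧ m ≤ n - 1)
    (e : Module.Basis (Fin n) ℝ (Fin n → ℝ))
    (B : (Fin n → ℝ) →ₗ[ℝ] (Fin n → ℝ) →ₗ[ℝ] ℝ)
    (hsymm : ∀ x y, B x y = B y x)
    (α : Fin n → ℝ) (hα : ∀ i, α i ≠ 0)
    (hdiag : ∀ i j, i ≠ j → B (e i) (e j) = 0)
    (hdiag2 : ∀ i, B (e i) (e i) = α i)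
    (I : Finset (Fin n)) (hI : I.card = m)
    (w : I → (Fin n → ℝ))
    (hw : ∀ i : I, w i ∈ Submodule.span ℝ (⇑e '' ((↑(Iᶜ) : Set (Fin n)))))
    (V : Submodule ℝ (Fin n → ℝ))
    (hV : V = Submodule.span ℝ (Set.range fun i : I => e i.1 + w i))
    (M : Matrix I I ℝ) (hM : ∀ ℓ ℓ' : I, M ℓ ℓ' = B (w ℓ) (w ℓ') / α ℓ.1) :
    (∃ v ∈ V, v ≠ 0 ∧ ∀ x ∈ V, B v x = 0) ↔ (M + 1).det = 0 := by
  classical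
  set u : I → (Fin n → ℝ) := fun ℓ => e ℓ.1 + w ℓ with hudef
  set G : Matrix I I ℝ := fun ℓ ℓ' => α ℓ.1 * (M + 1) ℓ ℓ' with hGdef
  -- B (e i) (w ℓ) = 0 for i ∈ I
  have hBew : ∀ (i : Fin n), i ∈ I → ∀ ℓ : I, B (e i) (w ℓ) = 0 := by
    intro i hi ℓ
    refine Submodule.span_induction ?_ ?_ ?_ ?_ (hw ℓ)
    · rintro x ⟨j, hj, rfl⟩
      simp only [Finset.coe_compl, Set.mem_compl_iff, Finset.mem_coe] at hj
      exact hdiag i j (fun h => hj (h ▸ hi))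
    · simp
    · intro x y _ _ hx hy; simp [hx, hy]
    · intro a x _ hx; simp [hx]
  -- Gram matrix identity
  have hGram : ∀ ℓ ℓ' : I, B (u ℓ) (u ℓ') = G ℓ ℓ' := by
    intro ℓ ℓ'
    have h1 : B (e ℓ.1) (w ℓ') = 0 := hBew ℓ.1 ℓ.2 ℓ'
    have h2 : B (w ℓ) (e ℓ'.1) = 0 := by rw [hsymm]; exact hBew ℓ'.1 ℓ'.2 ℓ
    have hee : B (e ℓ.1) (e ℓ'.1) = if ℓ = ℓ' then α ℓ.1 else 0 := by
      by_cases h : ℓ = ℓ'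
      · subst h; simp [hdiag2]
      · have hne : ℓ.1 ≠ ℓ'.1 := fun hh => h (Subtype.ext hh)
        simp [h, hdiag ℓ.1 ℓ'.1 hne]
    have hc : α ℓ.1 * ((B (w ℓ)) (w ℓ') / α ℓ.1) = (B (w ℓ)) (w ℓ') := by
      rw [mul_div_assoc', mul_comm, mul_div_assoc, div_self (hα ℓ.1), mul_one]
    simp only [hudef, map_add, LinearMap.add_apply, h1, h2, hee, hGdef,
      Matrix.add_apply, Matrix.one_apply, hM]
    by_cases h : ℓ = ℓ'
    · subst h
      simp [mul_add, hc, add_comm]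
    · simp [h, hc]
  have hBeu : ∀ ℓ₀ ℓ : I, B (e ℓ₀.1) (u ℓ) = if ℓ₀ = ℓ then α ℓ₀.1 else 0 := by
    intro ℓ₀ ℓ
    have h1 : B (e ℓ₀.1) (w ℓ) = 0 := hBew ℓ₀.1 ℓ₀.2 ℓ
    by_cases h : ℓ₀ = ℓ
    · subst h; simp [hudef, h1, hdiag2]
    · have hne : ℓ₀.1 ≠ ℓ.1 := fun hh => h (Subtype.ext hh)
      simp [hudef, h1, h, hdiag ℓ₀.1 ℓ.1 hne]
  -- nonvanishing of nontrivial combinations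
  have hne0 : ∀ c : I → ℝ, c ≠ 0 → (∑ ℓ, c ℓ • u ℓ) ≠ 0 := by
    intro c hc h0
    obtain ⟨ℓ₀, hℓ₀⟩ := Function.ne_iff.mp hc
    have hval : B (e ℓ₀.1) (∑ ℓ, c ℓ • u ℓ) = c ℓ₀ * α ℓ₀.1 := by
      rw [map_sum]
      simp [hBeu, Finset.sum_ite_eq, mul_ite]
    rw [h0] at hval
    simp only [map_zero] at hval
    exact hα ℓ₀.1 (by
      rcases mul_eq_zero.mp hval.symm with h | h
      · exact absurd h hℓ₀
      · exact h)
  -- B of a combination against u ℓ'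
  have hBsum : ∀ (c : I → ℝ) (ℓ' : I),
      B (∑ ℓ, c ℓ • u ℓ) (u ℓ') = Matrix.vecMul c G ℓ' := by
    intro c ℓ'
    simp [Matrix.vecMul, dotProduct, map_sum, LinearMap.sum_apply,
      map_smul, LinearMap.smul_apply, hGram, smul_eq_mul]
  -- determinant relation
  have hdetG : G.det = (∏ ℓ : I, α ℓ.1) * (M + 1).det := by
    have hGfac : G = Matrix.diagonal (fun ℓ : I => α ℓ.1) * (M + 1) := by
      ext ℓ ℓ'
      simp [hGdef, Matrix.mul_apply, Matrix.diagonal, Finset.sum_ite_eq, ite_mul]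
    rw [hGfac, Matrix.det_mul, Matrix.det_diagonal]
  have hdet_iff : G.det = 0 ↔ (M + 1).det = 0 := by
    rw [hdetG, mul_eq_zero]
    have : (∏ ℓ : I, α ℓ.1) ≠ 0 := Finset.prod_ne_zero_iff.mpr fun ℓ _ => hα ℓ.1
    tauto
  rw [← hdet_iff, ← Matrix.exists_vecMul_eq_zero_iff]
  constructor
  · rintro ⟨v, hvV, hv0, hvB⟩
    rw [hV] at hvV
    obtain ⟨c, hc⟩ := (Submodule.mem_span_range_iff_exists_fun ℝ).mp hvV
    refine ⟨c, ?_, ?_⟩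
    · rintro rfl; apply hv0; rw [← hc]; simp
    · funext ℓ'
      have huV : u ℓ' ∈ V := hV ▸ Submodule.subset_span ⟨ℓ', rfl⟩
      have hBv := hvB (u ℓ') huV
      rw [← hc, hBsum] at hBv
      simpa using hBv
  · rintro ⟨c, hc0, hcG⟩
    refine ⟨∑ ℓ, c ℓ • u ℓ, ?_, hne0 c hc0, ?_⟩
    · rw [hV]
      exact Submodule.sum_mem _ fun ℓ _ =>
        Submodule.smul_mem _ _ (Submodule.subset_span ⟨ℓ, rfl⟩)
    · intro x hx
      rw [hV] at hx
      refine Submodule.span_induction ?_ ?_ ?_ ?_ hx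
      · rintro y ⟨ℓ', rfl⟩
        rw [hBsum, hcG]
        rfl
      · simp
      · intro y z _ _ hy hz; rw [map_add, hy, hz, add_zero]
      · intro a y _ hy; rw [map_smul, hy, smul_zero]
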